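/- Let U be a finite set of pairwise distinct unit vectors in ℝ² with pos(U) = ℝ², and suppose u ∈ U_□. If {u, x, y, z} ⊆ U satisfies pos{u,x,y,z} = ℝ², then −u ∈ {x,y,z} and hence the polygon with outer normal directions u, x, y, z has two parallel edges (is a trapezoid). -/

import Mathlib

open RealInnerProductSpace

noncomputable section

abbrev V2 : Type := EuclideanSpace ℝ (Fin 2)

/-- The positive hull: all nonnegative linear combinations of elements of `M`. -/
def pos {E : Type*} [AddCommMonoid E] [Module ℝ E] (M : Set E) : Set E :=
  {x | ∃ (s : Finset E) (c : E → ℝ),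
    (↑s : Set E) ⊆ M ∧ (∀ v, 0 ≤ c v) ∧ x = ∑ v ∈ s, c v • v}

lemma exists_t (a b : Fin 3 → ℝ)
    (hcross : ∀ i j, 0 < b i → b j < 0 → a i * b j - a j * b i ≤ 0)
    (hzero : ∀ i, b i = 0 → 0 ≤ a i) :
    ∃ t : ℝ, ∀ i, t * b i ≤ a i := by
  by_cases hl : (Finset.univ.filter (fun j => b j < 0)).Nonempty
  · have hne : ((Finset.univ.filter (fun j => b j < 0)).image (fun j => a j / b j)).Nonempty :=
      hl.image _
    refine ⟨((Finset.univ.filter (fun j => b j < 0)).image (fun j => a j / b j)).max' hne,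
      fun i => ?_⟩
    obtain ⟨j0, hj0mem, hj0⟩ := Finset.mem_image.mp (Finset.max'_mem _ hne)
    have hbj0 : b j0 < 0 := (Finset.mem_filter.mp hj0mem).2
    rcases lt_trichotomy (b i) 0 with hbi | hbi | hbi
    · have hmem : a i / b i ∈ (Finset.univ.filter (fun j => b j < 0)).image
          (fun j => a j / b j) :=
        Finset.mem_image.mpr ⟨i, Finset.mem_filter.mpr ⟨Finset.mem_univ i, hbi⟩, rfl⟩
      have hti := Finset.le_max' _ (a i / b i) hmem
      have := mul_le_mul_of_nonpos_right hti (le_of_lt hbi)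
      rwa [div_mul_cancel₀ _ (ne_of_lt hbi)] at this
    · rw [hbi, mul_zero]; exact hzero i hbi
    · have hc := hcross i j0 hbi hbj0
      rw [← hj0, div_mul_eq_mul_div, div_le_iff_of_neg hbj0]
      nlinarith
  · refine ⟨-(|a 0 / b 0| + |a 1 / b 1| + |a 2 / b 2|), fun i => ?_⟩
    have hbi : 0 ≤ b i := by
      by_contra hneg
      exact hl ⟨i, Finset.mem_filter.mpr ⟨Finset.mem_univ i, lt_of_not_ge hneg⟩⟩
    rcases hbi.eq_or_lt with hbi0 | hbi0
    · rw [← hbi0, mul_zero]; exact hzero i hbi0.symm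
    · have h1 : -(|a 0 / b 0| + |a 1 / b 1| + |a 2 / b 2|) ≤ a i / b i := by
        have g0 := abs_nonneg (a 0 / b 0); have g1 := abs_nonneg (a 1 / b 1)
        have g2 := abs_nonneg (a 2 / b 2); have g3 := neg_abs_le (a i / b i)
        have hi : i = 0 ∨ i = 1 ∨ i = 2 := by omega
        rcases hi with rfl | rfl | rfl <;> linarith
      have := mul_le_mul_of_nonneg_right h1 (le_of_lt hbi0)
      rwa [div_mul_cancel₀ _ (ne_of_gt hbi0)] at this

open RealInnerProductSpace

lemma span3 {E : Type*} [AddCommGroup E] [Module ℝ E] (u n p q : E)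
    (ap bp aq bq : ℝ)
    (hp : p = ap • u + bp • n) (hq : q = aq • u + bq • n)
    (hbp : 0 < bp) (hbq : bq < 0) (hd : 0 < ap * bq - aq * bp)
    (hup : u ≠ p) (huq : u ≠ q) (hpq : p ≠ q)
    (hw : ∀ w : E, ∃ aw bw : ℝ, w = aw • u + bw • n) :
    pos {u, p, q} = Set.univ := by
  classical
  apply Set.eq_univ_of_forall
  intro w
  obtain ⟨aw, bw, hwe⟩ := hw w
  set d : ℝ := ap * bq - aq * bp with hdd
  set B0 : ℝ := aw * bq - bw * aq with hB0
  set C0 : ℝ := bw * ap - aw * bp with hC0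
  set M : ℝ := max (|B0| / (-bq)) (|C0| / bp) with hM
  have hdn : d ≠ 0 := ne_of_gt hd
  have hM0 : 0 ≤ M := le_trans (div_nonneg (abs_nonneg _) (by linarith)) (le_max_left _ _)
  have hcP : 0 ≤ (B0 - M * bq) / d := by
    apply div_nonneg _ (le_of_lt hd)
    have h1 : |B0| / (-bq) ≤ M := le_max_left _ _
    have h2 := (div_le_iff₀ (by linarith : (0:ℝ) < -bq)).mp h1
    have := neg_abs_le B0
    nlinarith
  have hcQ : 0 ≤ (C0 + M * bp) / d := by
    apply div_nonneg _ (le_of_lt hd)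
    have h1 : |C0| / bp ≤ M := le_max_right _ _
    have h2 := (div_le_iff₀ hbp).mp h1
    have := neg_abs_le C0
    nlinarith
  have E1 : M + (B0 - M * bq) / d * ap + (C0 + M * bp) / d * aq = aw := by
    field_simp
    rw [hB0, hC0, hdd]; ring
  have E2 : (B0 - M * bq) / d * bp + (C0 + M * bp) / d * bq = bw := by
    field_simp
    rw [hB0, hC0, hdd]
    ring
  have hkey : w = M • u + ((B0 - M * bq) / d) • p + ((C0 + M * bp) / d) • q := by
    rw [hwe, hp, hq, ← E1, ← E2]
    simp only [smul_add, smul_smul, add_smul]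
    abel
  refine ⟨{u, p, q}, fun v => if v = u then M else if v = p then (B0 - M * bq) / d
    else if v = q then (C0 + M * bp) / d else 0, ?_, ?_, ?_⟩
  · intro v hv
    simp only [Finset.coe_insert, Finset.coe_singleton, Set.mem_insert_iff,
      Set.mem_singleton_iff] at hv
    simpa using hv
  · intro v
    dsimp only
    split_ifs
    exacts [hM0, hcP, hcQ, le_refl 0]
  · rw [Finset.sum_insert (by simp [hup, huq] : u ∉ ({p, q} : Finset E)),
      Finset.sum_insert (by simp [hpq] : p ∉ ({q} : Finset E)),
      Finset.sum_singleton]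
    dsimp only
    rw [if_pos rfl, if_neg (Ne.symm hup), if_pos rfl, if_neg (Ne.symm huq),
      if_neg (Ne.symm hpq), if_pos rfl]
    rw [hkey]; abel

/-- If `u ∈ U_□` and `{u,x,y,z} ⊆ U` positively spans `ℝ²`, then `-u ∈ {x,y,z}`,
so the quadrilateral with these outer normals has an antipodal pair of normals
(it is a trapezoid). -/
theorem stmt6 (U : Set V2) (hfin : U.Finite) (hunit : ∀ v ∈ U, ‖v‖ = 1)
    (hpos : pos U = Set.univ) (u : V2) (hu : u ∈ U)
    (hsq : ¬ ∃ v ∈ U, ∃ w ∈ U, pos {u, v, w} = Set.univ) :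
    ∀ x ∈ U, ∀ y ∈ U, ∀ z ∈ U, pos {u, x, y, z} = Set.univ →
      -u ∈ ({x, y, z} : Set V2) := by
  intro x hx y hy z hz hP
  by_contra hne
  set n : V2 := (WithLp.equiv 2 (Fin 2 → ℝ)).symm ![-(u 1), u 0] with hn
  have hn0 : n 0 = -(u 1) := rfl
  have hn1 : n 1 = u 0 := rfl
  have huu : ⟪u, u⟫ = 1 := by
    have := real_inner_self_eq_norm_sq u
    rw [hunit u hu] at this; simpa using this
  have hinner : ∀ v w : V2, ⟪v, w⟫ = v 0 * w 0 + v 1 * w 1 := by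
    intro v w; simp [PiLp.inner_apply, Fin.sum_univ_two]; ring
  have hsum : u 0 * u 0 + u 1 * u 1 = 1 := by rw [← hinner]; exact huu
  have hun : ⟪u, n⟫ = 0 := by rw [hinner, hn0, hn1]; ring
  have hbn : ∀ v : V2, ⟪v, n⟫ = v 1 * u 0 - v 0 * u 1 := by
    intro v; rw [hinner, hn0, hn1]; ring
  -- basis expansion
  have hbasis : ∀ v : V2, v = ⟪v, u⟫ • u + ⟪v, n⟫ • n := by
    intro v
    ext i
    fin_cases i
    · show v 0 = (⟪v, u⟫ • u + ⟪v, n⟫ • n) 0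
      rw [PiLp.add_apply, PiLp.smul_apply, PiLp.smul_apply, smul_eq_mul, smul_eq_mul,
        hinner v u, hbn v, hn0]
      linear_combination (-(v 0)) * hsum
    · show v 1 = (⟪v, u⟫ • u + ⟪v, n⟫ • n) 1
      rw [PiLp.add_apply, PiLp.smul_apply, PiLp.smul_apply, smul_eq_mul, smul_eq_mul,
        hinner v u, hbn v, hn1]
      linear_combination (-(v 1)) * hsum
  -- a unit vector in {x,y,z} orthogonal to n has nonneg inner with u
  have hbzero : ∀ v ∈ ({x, y, z} : Set V2), ⟪v, n⟫ = 0 → 0 ≤ ⟪v, u⟫ := by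
    intro v hv hb
    by_contra hlt
    push_neg at hlt
    have hvU : v ∈ U := by
      rcases hv with rfl | rfl | rfl
      exacts [hx, hy, hz]
    have hv1 : v 0 * v 0 + v 1 * v 1 = 1 := by
      have := real_inner_self_eq_norm_sq v
      rw [hunit v hvU] at this
      rw [← hinner]; simpa using this
    rw [hbn] at hb
    rw [hinner] at hlt
    have hc2 : (v 0 * u 0 + v 1 * u 1) * (v 0 * u 0 + v 1 * u 1) = 1 := by
      nlinarith [hv1, hsum, hb]
    have hc1 : v 0 * u 0 + v 1 * u 1 = -1 := by nlinarith
    have hveq : v = -u := by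
      ext i
      fin_cases i
      · show v 0 = -(u 0)
        linear_combination u 0 * hc1 - u 1 * hb - v 0 * hsum
      · show v 1 = -(u 1)
        linear_combination u 1 * hc1 + u 0 * hb - v 1 * hsum
    exact hne (hveq ▸ hv)
  by_cases hex : ∃ p ∈ ({x, y, z} : Set V2), ∃ q ∈ ({x, y, z} : Set V2),
      0 < ⟪p, n⟫ ∧ ⟪q, n⟫ < 0 ∧ 0 < ⟪p, u⟫ * ⟪q, n⟫ - ⟪q, u⟫ * ⟪p, n⟫
  · obtain ⟨p, hp, q, hq, hbp, hbq, hd⟩ := hex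
    have hpU : p ∈ U := by rcases hp with rfl | rfl | rfl; exacts [hx, hy, hz]
    have hqU : q ∈ U := by rcases hq with rfl | rfl | rfl; exacts [hx, hy, hz]
    have hup : u ≠ p := fun h => by rw [← h, hun] at hbp; exact lt_irrefl 0 hbp
    have huq : u ≠ q := fun h => by rw [← h, hun] at hbq; exact lt_irrefl 0 hbq
    have hpq : p ≠ q := fun h => by rw [h] at hbp; linarith
    exact hsq ⟨p, hpU, q, hqU, span3 u n p q ⟪p, u⟫ ⟪p, n⟫ ⟪q, u⟫ ⟪q, n⟫
      (hbasis p) (hbasis q) hbp hbq hd hup huq hpq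
      (fun w => ⟨⟪w, u⟫, ⟪w, n⟫, hbasis w⟩)⟩
  · push_neg at hex
    obtain ⟨t, ht⟩ := exists_t ![⟪x, u⟫, ⟪y, u⟫, ⟪z, u⟫] ![⟪x, n⟫, ⟪y, n⟫, ⟪z, n⟫]
      (by
        intro i j hbi hbj
        have hi : i = 0 ∨ i = 1 ∨ i = 2 := by omega
        have hj : j = 0 ∨ j = 1 ∨ j = 2 := by omega
        rcases hi with rfl | rfl | rfl <;> rcases hj with rfl | rfl | rfl <;>
          simp only [Matrix.cons_val_zero, Matrix.cons_val_one, Matrix.head_cons,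
            Matrix.cons_val_two, Matrix.tail_cons] at * <;>
        · have := hex _ (by simp) _ (by simp) hbi hbj; linarith)
      (by
        intro i hbi
        have hi : i = 0 ∨ i = 1 ∨ i = 2 := by omega
        rcases hi with rfl | rfl | rfl <;>
          simp only [Matrix.cons_val_zero, Matrix.cons_val_one, Matrix.head_cons,
            Matrix.cons_val_two, Matrix.tail_cons] at * <;>
        · exact hbzero _ (by simp) hbi)
    set h : V2 := u - t • n with hh
    have hvh : ∀ v ∈ ({u, x, y, z} : Set V2), 0 ≤ ⟪v, h⟫ := by
      intro v hv
      have hexp : ⟪v, h⟫ = ⟪v, u⟫ - t * ⟪v, n⟫ := by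
        rw [hh, inner_sub_right, real_inner_smul_right]
      rw [hexp]
      rcases hv with rfl | rfl | rfl | rfl
      · rw [huu, hbn]
        ring_nf
        norm_num
      · have := ht 0
        simp only [Matrix.cons_val_zero] at this; linarith
      · have := ht 1
        simp only [Matrix.cons_val_one, Matrix.head_cons, Matrix.cons_val_zero] at this; linarith
      · have := ht 2
        simp only [Matrix.cons_val_two, Matrix.tail_cons, Matrix.head_cons] at this; linarith
    have hmem : -h ∈ pos {u, x, y, z} := by rw [hP]; trivial
    obtain ⟨s, c, hsub, hc, heq⟩ := hmem
    have hge : 0 ≤ ⟪-h, h⟫ := by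
      rw [heq, sum_inner]
      apply Finset.sum_nonneg
      intro v hv
      rw [real_inner_smul_left]
      exact mul_nonneg (hc v) (hvh v (hsub hv))
    have hle : ⟪h, h⟫ ≤ 0 := by rw [inner_neg_left] at hge; linarith
    have hh0 : h = 0 := real_inner_self_nonpos.mp hle
    have hone : ⟪u, h⟫ = 1 := by
      rw [hh, inner_sub_right, real_inner_smul_right, huu, hun]; ring
    rw [hh0, inner_zero_right] at hone
    norm_num at hone

end
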